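/- The endomorphism ρ₀ of ℤ⁴ determined by ρ₀(e)=-f, ρ₀(f)=-e-f-y, ρ₀(x)=f-x, ρ₀(y)=3f-x+y is an isometry of the symmetric bilinear form with Gram matrix G₀ = [[0,1,0,0],[1,0,0,0],[0,0,2,1],[0,0,1,-2]] (i.e. ρ₀ᵀ G₀ ρ₀ = G₀); moreover ρ₀⁵ = id, ρ₀ ≠ id, and id + ρ₀ + ρ₀² + ρ₀³ + ρ₀⁴ = 0 (in particular ρ₀ has order 5 and fixes no nonzero vector). -/
import Mathlib


open Matrix

/-- Gram matrix of `U ⊕ V` in the basis `e, f, x, y`. -/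
def G₀ : Matrix (Fin 4) (Fin 4) ℤ :=
  !![0, 1, 0, 0;
     1, 0, 0, 0;
     0, 0, 2, 1;
     0, 0, 1, -2]

/-- The matrix of `ρ₀` in the basis `e, f, x, y` (columns are the images of
`e, f, x, y`): `ρ₀(e) = -f`, `ρ₀(f) = -e - f - y`, `ρ₀(x) = f - x`, `ρ₀(y) = 3f - x + y`. -/
def ρ₀ : Matrix (Fin 4) (Fin 4) ℤ :=
  !![0, -1, 0, 0;
     -1, -1, 1, 3;
     0, 0, -1, -1;
     0, -1, 0, 1]

theorem stmt0 :
    ρ₀ᵀ * G₀ * ρ₀ = G₀ ∧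
    ρ₀ ^ 5 = 1 ∧
    ρ₀ ≠ 1 ∧
    1 + ρ₀ + ρ₀ ^ 2 + ρ₀ ^ 3 + ρ₀ ^ 4 = 0 := by
  exact ⟨by decide, by decide, by decide, by decide⟩
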